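/- Let η be a Borel probability measure on ℝ with cumulative distribution function F and quantile function F⁻¹(u) := inf{x ∈ ℝ : F(x) ≥ u}. For each n ≥ 1 define the quantile-midpoint empirical distribution function F_n(x) := (1/n) · #{ i ∈ {1, …, n} : F⁻¹((i − 1/2)/n) ≤ x }. Then for every n ≥ 1 and every x ∈ ℝ, |F_n(x) − F(x)| ≤ 1/n. Consequently the discrete measures η_n := (1/n) Σ_{i=1}^n δ_{F⁻¹((i−1/2)/n)} converge weakly to η as n → ∞. -/

import Mathlib

open MeasureTheory Filter

noncomputable section

/-- The cumulative distribution function of a measure on `ℝ`. -/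
def cdfOf (η : Measure ℝ) (x : ℝ) : ℝ := (η (Set.Iic x)).toReal

/-- The quantile function `F⁻¹(u) = inf {x : F x ≥ u}`. -/
def quantileOf (η : Measure ℝ) (u : ℝ) : ℝ := sInf {x : ℝ | u ≤ cdfOf η x}

/-- The quantile-midpoint empirical distribution function
`F_n(x) = (1/n) #{i ∈ {1,…,n} : F⁻¹((i − 1/2)/n) ≤ x}`. -/
def quantileMidpointEDF (η : Measure ℝ) (n : ℕ) (x : ℝ) : ℝ :=
  (((Finset.range n).filter
      fun i : ℕ => quantileOf η (((i : ℝ) + 1 / 2) / n) ≤ x).card : ℝ) / n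

/-- The discrete quantile-midpoint measure `η_n = (1/n) Σ_{i=1}^n δ_{F⁻¹((i−1/2)/n)}`. -/
def quantileMidpointMeasure (η : Measure ℝ) (n : ℕ) : Measure ℝ :=
  ((n : ENNReal))⁻¹ •
    ∑ i ∈ Finset.range n, Measure.dirac (quantileOf η (((i : ℝ) + 1 / 2) / n))

open Set Topology

section Aux

variable (η : Measure ℝ) [IsProbabilityMeasure η]

lemma cdfOf_eq : cdfOf η = ⇑(ProbabilityTheory.cdf η) :=
  funext fun x => by rw [ProbabilityTheory.cdf_eq_real]; rfl

lemma cdfOf_mono : Monotone (cdfOf η) := by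
  rw [cdfOf_eq]; exact ProbabilityTheory.monotone_cdf η

lemma cdfOf_nonneg (x : ℝ) : 0 ≤ cdfOf η x := ENNReal.toReal_nonneg

lemma cdfOf_le_one (x : ℝ) : cdfOf η x ≤ 1 := by
  rw [cdfOf_eq]; exact ProbabilityTheory.cdf_le_one η x

lemma quantile_galois {u x : ℝ} (hu0 : 0 < u) (hu1 : u < 1) :
    quantileOf η u ≤ x ↔ u ≤ cdfOf η x := by
  set S : Set ℝ := {y : ℝ | u ≤ cdfOf η y} with hS
  have hne : S.Nonempty := by
    have h1 : Tendsto (cdfOf η) atTop (𝓝 1) := by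
      rw [cdfOf_eq]; exact ProbabilityTheory.tendsto_cdf_atTop η
    exact (h1.eventually (eventually_ge_nhds hu1)).exists
  have hbdd : BddBelow S := by
    have h0 : Tendsto (cdfOf η) atBot (𝓝 0) := by
      rw [cdfOf_eq]; exact ProbabilityTheory.tendsto_cdf_atBot η
    obtain ⟨y, hy⟩ := (h0.eventually (eventually_lt_nhds hu0)).exists
    refine ⟨y, fun z hz => ?_⟩
    by_contra hzy
    exact absurd (le_trans hz (cdfOf_mono η (le_of_not_ge hzy))) (not_le.mpr hy)
  constructor
  · intro h
    have key : u ≤ cdfOf η (sInf S) := by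
      by_contra hlt
      push_neg at hlt
      have hrc : ContinuousWithinAt (cdfOf η) (Set.Ici (sInf S)) (sInf S) := by
        rw [cdfOf_eq]
        exact (ProbabilityTheory.cdf η).right_continuous (sInf S)
      have hev : ∀ᶠ y in nhdsWithin (sInf S) (Set.Ici (sInf S)), cdfOf η y < u :=
        hrc.eventually (eventually_lt_nhds hlt)
      obtain ⟨V, hVmem, hV⟩ := eventually_iff_exists_mem.mp hev
      obtain ⟨b, hb, hIco⟩ := mem_nhdsGE_iff_exists_Ico_subset.mp hVmem
      obtain ⟨z, hzS, hzb⟩ := exists_lt_of_csInf_lt hne hb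
      have : cdfOf η z < u := hV z (hIco ⟨csInf_le hbdd hzS, hzb⟩)
      exact absurd hzS (not_le.mpr this)
    exact key.trans (cdfOf_mono η h)
  · intro h
    exact csInf_le hbdd h


lemma qmFilter_eq (n : ℕ) (hn : 1 ≤ n) (x : ℝ) :
    ((Finset.range n).filter fun i : ℕ => quantileOf η (((i : ℝ) + 1 / 2) / n) ≤ x)
      = Finset.range (min n (Nat.floor ((n : ℝ) * cdfOf η x + 1 / 2))) := by
  have hn0 : (0 : ℝ) < n := by exact_mod_cast hn
  have ht : (0 : ℝ) ≤ (n : ℝ) * cdfOf η x + 1 / 2 := by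
    have := cdfOf_nonneg η x; nlinarith
  ext i
  simp only [Finset.mem_filter, Finset.mem_range, lt_min_iff]
  refine and_congr_right fun hi => ?_
  have hi' : (i : ℝ) + 1 ≤ n := by exact_mod_cast hi
  have hu0 : 0 < ((i : ℝ) + 1 / 2) / n := by positivity
  have hu1 : ((i : ℝ) + 1 / 2) / n < 1 := by
    rw [div_lt_one hn0]; linarith
  rw [quantile_galois η hu0 hu1, div_le_iff₀ hn0, Nat.lt_iff_add_one_le,
    Nat.le_floor_iff ht]
  push_cast
  constructor <;> intro h <;> nlinarith

lemma abs_EDF_sub_cdf (n : ℕ) (hn : 1 ≤ n) (x : ℝ) :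
    |quantileMidpointEDF η n x - cdfOf η x| ≤ 1 / n := by
  have hn0 : (0 : ℝ) < n := by exact_mod_cast hn
  set t : ℝ := (n : ℝ) * cdfOf η x + 1 / 2 with hts
  have ht : (0 : ℝ) ≤ t := by
    have := cdfOf_nonneg η x; rw [hts]; nlinarith
  set k : ℕ := min n (Nat.floor t) with hks
  have hE : quantileMidpointEDF η n x = (k : ℝ) / n := by
    unfold quantileMidpointEDF
    rw [qmFilter_eq η n hn x, Finset.card_range]
  have h1 : (k : ℝ) ≤ t := by
    calc (k : ℝ) ≤ (Nat.floor t : ℝ) := by exact_mod_cast min_le_right _ _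
    _ ≤ t := Nat.floor_le ht
  have h2 : (n : ℝ) * cdfOf η x ≤ (k : ℝ) + 1 := by
    rcases le_total n (Nat.floor t) with h | h
    · have hk : k = n := min_eq_left h
      have := cdfOf_le_one η x
      rw [hk]; nlinarith
    · have hk : k = Nat.floor t := min_eq_right h
      have := Nat.lt_floor_add_one t
      rw [hk]
      have : t < (Nat.floor t : ℝ) + 1 := Nat.lt_floor_add_one t
      rw [hts] at this
      linarith [hk ▸ this]
  have e : (k : ℝ) / n - cdfOf η x = ((k : ℝ) - n * cdfOf η x) / n := by
    field_simp
  rw [hE, e, abs_div, abs_of_pos hn0]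
  gcongr
  rw [abs_le]
  rw [hts] at h1
  constructor <;> linarith

open scoped Classical in
lemma qmm_apply (n : ℕ) (s : Set ℝ) (hs : MeasurableSet s) :
    quantileMidpointMeasure η n s =
      (((Finset.range n).filter
          fun i : ℕ => quantileOf η (((i : ℝ) + 1 / 2) / n) ∈ s).card : ENNReal) / n := by
  classical
  rw [quantileMidpointMeasure, Measure.smul_apply, Measure.finset_sum_apply]
  simp only [Measure.dirac_apply' _ hs, Set.indicator_apply, Pi.one_apply]
  rw [Finset.sum_boole, smul_eq_mul, ENNReal.div_eq_inv_mul]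

lemma qmm_isProb (n : ℕ) (hn : 1 ≤ n) :
    IsProbabilityMeasure (quantileMidpointMeasure η n) := by
  constructor
  rw [qmm_apply η n Set.univ MeasurableSet.univ]
  simp only [Set.mem_univ, Finset.filter_true, Finset.card_range]
  exact ENNReal.div_self (by exact_mod_cast (by omega : n ≠ 0)) (by simp)

open scoped Classical in
lemma qmm_Iic_toReal (n : ℕ) (x : ℝ) :
    (quantileMidpointMeasure η n (Set.Iic x)).toReal = quantileMidpointEDF η n x := by
  rw [qmm_apply η n _ measurableSet_Iic, quantileMidpointEDF]
  simp only [Set.mem_Iic]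
  rw [ENNReal.toReal_div]
  simp

lemma qmm_Ioc_toReal (n : ℕ) (hn : 1 ≤ n) {a b : ℝ} (hab : a ≤ b) :
    (quantileMidpointMeasure η n (Set.Ioc a b)).toReal =
      quantileMidpointEDF η n b - quantileMidpointEDF η n a := by
  haveI := qmm_isProb η n hn
  rw [(show Set.Ioc a b = Set.Iic b \ Set.Iic a from Set.ext fun y => by simp [and_comm]),
    measure_diff (Set.Iic_subset_Iic.mpr hab) measurableSet_Iic.nullMeasurableSet
      (measure_ne_top _ _),
    ENNReal.toReal_sub_of_le (measure_mono (Set.Iic_subset_Iic.mpr hab)) (measure_ne_top _ _),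
    qmm_Iic_toReal, qmm_Iic_toReal]

lemma eta_Ioc_toReal {a b : ℝ} (hab : a ≤ b) :
    (η (Set.Ioc a b)).toReal = cdfOf η b - cdfOf η a := by
  rw [(show Set.Ioc a b = Set.Iic b \ Set.Iic a from Set.ext fun y => by simp [and_comm]),
    measure_diff (Set.Iic_subset_Iic.mpr hab) measurableSet_Iic.nullMeasurableSet
      (measure_ne_top η _),
    ENNReal.toReal_sub_of_le (measure_mono (Set.Iic_subset_Iic.mpr hab)) (measure_ne_top η _)]
  rfl

lemma tendsto_EDF (x : ℝ) :
    Tendsto (fun n : ℕ => quantileMidpointEDF η n x) atTop (𝓝 (cdfOf η x)) := by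
  have h0 : Tendsto (fun n : ℕ => quantileMidpointEDF η n x - cdfOf η x) atTop (𝓝 0) := by
    apply squeeze_zero_norm' _ tendsto_one_div_atTop_nhds_zero_nat
    filter_upwards [eventually_ge_atTop 1] with n hn
    exact abs_EDF_sub_cdf η n hn x
  have := h0.add_const (cdfOf η x)
  simpa using this

def qmmP (n : ℕ) : ProbabilityMeasure ℝ :=
  if h : 1 ≤ n then ⟨quantileMidpointMeasure η n, qmm_isProb η n h⟩
  else ⟨η, inferInstance⟩

lemma qmmP_eq {n : ℕ} (hn : 1 ≤ n) :
    (qmmP η n : Measure ℝ) = quantileMidpointMeasure η n := by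
  have h : qmmP η n = ⟨quantileMidpointMeasure η n, qmm_isProb η n hn⟩ := dif_pos hn
  rw [h]
  rfl

lemma tendsto_qmmP_Ioc (a b : ℝ) :
    Tendsto (fun n : ℕ => ((qmmP η n : Measure ℝ) (Set.Ioc a b)).toReal) atTop
      (𝓝 ((η (Set.Ioc a b)).toReal)) := by
  rcases le_or_gt a b with hab | hab
  · rw [eta_Ioc_toReal η hab]
    apply Tendsto.congr' _ ((tendsto_EDF η b).sub (tendsto_EDF η a))
    filter_upwards [eventually_ge_atTop 1] with n hn
    rw [qmmP_eq η hn, qmm_Ioc_toReal η n hn hab]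
  · have hemp : Set.Ioc a b = ∅ := Set.Ioc_eq_empty (not_lt.mpr hab.le)
    simp only [hemp, measure_empty, ENNReal.toReal_zero]
    exact tendsto_const_nhds

lemma tendsto_qmmP_biUnion : ∀ (m : ℕ) (c : ℕ → ℝ × ℝ),
    Tendsto
      (fun n : ℕ =>
        ((qmmP η n : Measure ℝ) (⋃ j ∈ Finset.range m, Set.Ioc (c j).1 (c j).2)).toReal)
      atTop
      (𝓝 ((η (⋃ j ∈ Finset.range m, Set.Ioc (c j).1 (c j).2)).toReal)) := by
  intro m
  induction m with
  | zero =>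
    intro c
    simp only [Finset.range_zero, Finset.notMem_empty, Set.iUnion_of_empty, Set.iUnion_empty,
      measure_empty, ENNReal.toReal_zero]
    exact tendsto_const_nhds
  | succ m ih =>
    intro c
    set c' : ℕ → ℝ × ℝ := fun j => ((c m).1 ⊔ (c j).1, (c m).2 ⊓ (c j).2) with hc'
    have hA : MeasurableSet (⋃ j ∈ Finset.range m, Set.Ioc (c j).1 (c j).2) :=
      (Finset.range m).measurableSet_biUnion (fun j _ => measurableSet_Ioc)
    have hset : (⋃ j ∈ Finset.range (m + 1), Set.Ioc (c j).1 (c j).2)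
        = Set.Ioc (c m).1 (c m).2 ∪ ⋃ j ∈ Finset.range m, Set.Ioc (c j).1 (c j).2 := by
      rw [Finset.range_add_one]
      exact Finset.set_biUnion_insert m (Finset.range m) _
    have hinter : Set.Ioc (c m).1 (c m).2 ∩ (⋃ j ∈ Finset.range m, Set.Ioc (c j).1 (c j).2)
        = ⋃ j ∈ Finset.range m, Set.Ioc (c' j).1 (c' j).2 := by
      rw [Set.inter_iUnion₂]
      refine Set.iUnion₂_congr fun j _ => ?_
      rw [Set.Ioc_inter_Ioc]
    have key : ∀ (μ : Measure ℝ), IsFiniteMeasure μ →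
        (μ (⋃ j ∈ Finset.range (m + 1), Set.Ioc (c j).1 (c j).2)).toReal
          = (μ (Set.Ioc (c m).1 (c m).2)).toReal
            + (μ (⋃ j ∈ Finset.range m, Set.Ioc (c j).1 (c j).2)).toReal
            - (μ (⋃ j ∈ Finset.range m, Set.Ioc (c' j).1 (c' j).2)).toReal := by
      intro μ hfin
      have h := measure_union_add_inter (μ := μ) (Set.Ioc (c m).1 (c m).2) hA
      have h' := congrArg ENNReal.toReal h
      rw [ENNReal.toReal_add (measure_ne_top μ _) (measure_ne_top μ _),
        ENNReal.toReal_add (measure_ne_top μ _) (measure_ne_top μ _), hinter] at h'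
      rw [hset]
      linarith
    have hrw := key η inferInstance
    rw [hrw]
    refine Tendsto.congr (fun n => (key (qmmP η n : Measure ℝ) inferInstance).symm) ?_
    exact ((tendsto_qmmP_Ioc η _ _).add (ih c)).sub (ih c')

lemma exists_Ioc_union (G : Set ℝ) (hG : IsOpen G) {b : ℝ} (hb : b < (η G).toReal) :
    ∃ (m : ℕ) (c : ℕ → ℝ × ℝ),
      (⋃ j ∈ Finset.range m, Set.Ioc (c j).1 (c j).2) ⊆ G ∧
        b < (η (⋃ j ∈ Finset.range m, Set.Ioc (c j).1 (c j).2)).toReal := by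
  obtain ⟨e, he⟩ := exists_surjective_nat (ℚ × ℚ)
  classical
  set s : ℕ → Set ℝ := fun k =>
    if Set.Icc ((e k).1 : ℝ) ((e k).2 : ℝ) ⊆ G then Set.Ioo ((e k).1 : ℝ) ((e k).2 : ℝ)
    else ∅ with hs
  have hsG : ∀ k, s k ⊆ G := by
    intro k
    rw [hs]; dsimp only; split_ifs with h
    · exact fun y hy => h ⟨hy.1.le, hy.2.le⟩
    · exact Set.empty_subset G
  have hcover : G ⊆ ⋃ k, s k := by
    intro x hx
    obtain ⟨ε, hε, hball⟩ := Metric.isOpen_iff.mp hG x hx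
    have hsub : Set.Ioo (x - ε) (x + ε) ⊆ G := by rw [← Real.ball_eq_Ioo]; exact hball
    obtain ⟨p, hp1, hp2⟩ := exists_rat_btwn (show x - ε < x by linarith)
    obtain ⟨q, hq1, hq2⟩ := exists_rat_btwn (show x < x + ε by linarith)
    obtain ⟨k, hk⟩ := he (p, q)
    refine Set.mem_iUnion.mpr ⟨k, ?_⟩
    rw [hs]; dsimp only; rw [hk]; dsimp only
    rw [if_pos]
    · exact ⟨hp2, hq1⟩
    · intro z hz
      exact hsub ⟨by linarith [hz.1], by linarith [hz.2]⟩
  have hGeq : (⋃ k, s k) = G := subset_antisymm (Set.iUnion_subset hsG) hcover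
  have hmono : Monotone (fun m : ℕ => ⋃ k ∈ Finset.range m, s k) := by
    intro m₁ m₂ hm y hy
    simp only [Set.mem_iUnion, Finset.mem_range] at hy ⊢
    obtain ⟨k, hk, h⟩ := hy
    exact ⟨k, lt_of_lt_of_le hk hm, h⟩
  have htend := tendsto_measure_iUnion_atTop (μ := η) hmono
  have hUeq : (⋃ m : ℕ, ⋃ k ∈ Finset.range m, s k) = G := by
    rw [← hGeq]
    ext y
    simp only [Set.mem_iUnion, Finset.mem_range]
    exact ⟨fun ⟨m, k, _, h⟩ => ⟨k, h⟩, fun ⟨k, h⟩ => ⟨k + 1, k, Nat.lt_succ_self k, h⟩⟩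
  rw [hUeq] at htend
  have htoReal : Tendsto (fun m : ℕ => (η (⋃ k ∈ Finset.range m, s k)).toReal) atTop
      (𝓝 ((η G).toReal)) := (ENNReal.tendsto_toReal (measure_ne_top η G)).comp htend
  obtain ⟨m, hm⟩ := (htoReal.eventually (eventually_gt_nhds hb)).exists
  refine ⟨m, fun k =>
    if Set.Icc ((e k).1 : ℝ) ((e k).2 : ℝ) ⊆ G then (((e k).1 : ℝ), ((e k).2 : ℝ))
    else (0, 0), ?_, ?_⟩
  · refine Set.iUnion₂_subset fun k _ => ?_
    dsimp only; split_ifs with h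
    · exact fun y hy => h ⟨hy.1.le, hy.2⟩
    · rw [Set.Ioc_self]; exact Set.empty_subset G
  · refine lt_of_lt_of_le hm ?_
    rw [ENNReal.toReal_le_toReal (measure_ne_top η _) (measure_ne_top η _)]
    refine measure_mono (Set.iUnion₂_mono fun k _ => ?_)
    rw [hs]; dsimp only; split_ifs with h
    · exact Set.Ioo_subset_Ioc_self
    · exact Set.empty_subset _

end Aux


/-- The quantile-midpoint empirical CDF is uniformly within `1/n` of the true CDF, and
consequently the quantile-midpoint measures converge weakly to `η`. -/
theorem quantileMidpoint_cdf_close_and_weak_conv (η : Measure ℝ) [IsProbabilityMeasure η] :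
    (∀ n : ℕ, 1 ≤ n → ∀ x : ℝ,
        |quantileMidpointEDF η n x - cdfOf η x| ≤ 1 / n) ∧
      (∀ f : BoundedContinuousFunction ℝ ℝ,
        Tendsto (fun n : ℕ => ∫ x, f x ∂(quantileMidpointMeasure η n)) atTop
          (nhds (∫ x, f x ∂η))) := by
  constructor
  · exact fun n hn x => abs_EDF_sub_cdf η n hn x
  · intro f
    set μP : ProbabilityMeasure ℝ := ⟨η, inferInstance⟩ with hμP
    have hconv : Tendsto (qmmP η) atTop (𝓝 μP) := by
      apply tendsto_of_forall_isOpen_le_liminf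
      intro G hGopen
      refine le_of_forall_lt_imp_le_of_dense fun b hb => ?_
      have hb' : (b : ℝ) < (η G).toReal := by
        have h1 : b < ((μP : Measure ℝ) G).toNNReal := hb
        exact_mod_cast h1
      obtain ⟨m, c, hsubG, hlt⟩ := exists_Ioc_union η G hGopen hb'
      have htd := tendsto_qmmP_biUnion η m c
      refine Filter.le_liminf_of_le
        ((isBoundedUnder_of ⟨1, fun n => (qmmP η n).apply_le_one G⟩).isCoboundedUnder_ge) ?_
      filter_upwards [htd.eventually (eventually_gt_nhds hlt)] with n hn
      have h1 : ((qmmP η n : Measure ℝ) (⋃ j ∈ Finset.range m, Set.Ioc (c j).1 (c j).2)).toReal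
          ≤ ((qmmP η n : Measure ℝ) G).toReal := by
        rw [ENNReal.toReal_le_toReal (measure_ne_top _ _) (measure_ne_top _ _)]
        exact measure_mono hsubG
      have h2 : (b : ℝ) ≤ ((qmmP η n : Measure ℝ) G).toReal := le_of_lt (lt_of_lt_of_le hn h1)
      rw [← NNReal.coe_le_coe]
      exact h2
    have hint := ProbabilityMeasure.tendsto_iff_forall_integral_tendsto.mp hconv f
    refine Tendsto.congr' ?_ hint
    filter_upwards [eventually_ge_atTop 1] with n hn
    rw [qmmP_eq η hn]

end
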